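/- If A is symmetric positive definite with block form A = [[B, E],[Eᵀ, C]], S = C - Eᵀ B⁻¹ E is the Schur complement, C₀ is the block diagonal part of C (with respect to a fixed partition of C into s×s blocks), and Eₛ = C₀ - S, then every eigenvalue of C₀⁻¹Eₛ is real and strictly less than 1. -/

import Mathlib

open Matrix Finset
open scoped ComplexOrder

/-- Complexification of a real positive definite matrix is positive definite. -/
lemma posDef_map_ofReal {n : Type*} [Fintype n] {M : Matrix n n ℝ} (hM : M.PosDef) :
    (M.map (Complex.ofReal)).PosDef := by
  have hsym : ∀ i j, M j i = M i j := fun i j => by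
    have := congrFun (congrFun hM.1 i) j
    simpa [conjTranspose_apply] using this
  refine PosDef.of_dotProduct_mulVec_pos ?_ ?_
  · ext i j
    simp [conjTranspose_apply, Complex.conj_ofReal, hsym i j]
  · intro x hx
    set r : n → ℝ := fun i => (x i).re with hr
    set t : n → ℝ := fun i => (x i).im with ht
    have hx' : (fun i => ((r i : ℂ))) + (Complex.I • fun i => ((t i : ℂ))) = x := by
      funext i
      simp [hr, ht, Complex.ext_iff, mul_comm]
    set u : n → ℂ := fun i => ((r i : ℂ)) with hu
    set w : n → ℂ := fun i => ((t i : ℂ)) with hw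
    have hsymdot : ∀ a b : n → ℂ, a ⬝ᵥ (M.map Complex.ofReal) *ᵥ b
        = b ⬝ᵥ (M.map Complex.ofReal) *ᵥ a := by
      intro a b
      rw [dotProduct_mulVec, ← mulVec_transpose]
      have : (M.map (Complex.ofReal))ᵀ = M.map Complex.ofReal := by
        ext i j; simp [hsym i j]
      rw [this, dotProduct_comm]
    have hreal : ∀ v : n → ℝ, (fun i => ((v i : ℂ))) ⬝ᵥ (M.map Complex.ofReal) *ᵥ
        (fun i => ((v i : ℂ))) = ((v ⬝ᵥ M *ᵥ v : ℝ) : ℂ) := by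
      intro v
      simp [dotProduct, mulVec, Finset.mul_sum]
    have key : star x ⬝ᵥ (M.map Complex.ofReal) *ᵥ x
        = ((r ⬝ᵥ M *ᵥ r + t ⬝ᵥ M *ᵥ t : ℝ) : ℂ) := by
      rw [← hx']
      have hstar : star (u + Complex.I • w) = u - Complex.I • w := by
        funext i
        simp [hu, hw, Complex.ext_iff]
      rw [hstar]
      rw [sub_dotProduct, mulVec_add, dotProduct_add, dotProduct_add,
        smul_dotProduct, mulVec_smul, dotProduct_smul, dotProduct_smul,
        smul_dotProduct]
      rw [hsymdot w u]
      rw [show u ⬝ᵥ (M.map Complex.ofReal) *ᵥ u = ((r ⬝ᵥ M *ᵥ r : ℝ) : ℂ) from hreal r,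
        show w ⬝ᵥ (M.map Complex.ofReal) *ᵥ w = ((t ⬝ᵥ M *ᵥ t : ℝ) : ℂ) from hreal t]
      push_cast [hreal]
      simp only [smul_eq_mul]
      rw [show Complex.I * (Complex.I * ((t ⬝ᵥ M *ᵥ t : ℝ) : ℂ)) = -((t ⬝ᵥ M *ᵥ t : ℝ) : ℂ) by
        rw [← mul_assoc, Complex.I_mul_I]; ring]
      ring
    rw [key]
    have hrt : r ≠ 0 ∨ t ≠ 0 := by
      by_contra h
      push_neg at h
      apply hx
      funext i
      have h1 := congrFun h.1 i
      have h2 := congrFun h.2 i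
      simp [hr, ht] at h1 h2
      exact Complex.ext h1 h2
    have hpos : 0 < r ⬝ᵥ M *ᵥ r + t ⬝ᵥ M *ᵥ t := by
      rcases hrt with h | h
      · have := hM.dotProduct_mulVec_pos h
        have h2 := hM.posSemidef.dotProduct_mulVec_nonneg t
        simp only [star_trivial] at this h2
        linarith
      · have := hM.dotProduct_mulVec_pos h
        have h2 := hM.posSemidef.dotProduct_mulVec_nonneg r
        simp only [star_trivial] at this h2
        linarith
    exact_mod_cast Complex.real_lt_real.mpr hpos

theorem stmt2 (p q s : ℕ)
    (B : Matrix (Fin p) (Fin p) ℝ) (E : Matrix (Fin p) (Fin q) ℝ)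
    (C : Matrix (Fin q) (Fin q) ℝ)
    (hA : (Matrix.fromBlocks B E Eᵀ C).PosDef)
    (π : Fin q → Fin s)
    (C₀ : Matrix (Fin q) (Fin q) ℝ)
    (hC₀ : ∀ i j, C₀ i j = if π i = π j then C i j else 0)
    (S Es : Matrix (Fin q) (Fin q) ℝ)
    (hS : S = C - Eᵀ * B⁻¹ * E) (hEs : Es = C₀ - S) :
    ∀ μ ∈ spectrum ℂ ((C₀⁻¹ * Es).map (Complex.ofReal)),
      μ.im = 0 ∧ μ.re < 1 := by
  classical
  have hET : Eᵀ = Eᴴ := (conjTranspose_eq_transpose_of_trivial E).symm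
  rw [hET] at hA hS
  have hAh : (Matrix.fromBlocks B E Eᴴ C)ᴴ = Matrix.fromBlocks B E Eᴴ C := hA.1
  rw [fromBlocks_conjTranspose] at hAh
  have hBh : B.IsHermitian := by
    have := congrArg Matrix.toBlocks₁₁ hAh
    simpa [Matrix.toBlocks_fromBlocks₁₁, Matrix.IsSymm] using this
  have hCh : C.IsHermitian := by
    have := congrArg Matrix.toBlocks₂₂ hAh
    simpa [Matrix.toBlocks_fromBlocks₂₂, Matrix.IsSymm] using this
  -- B is positive definite
  have hB : B.PosDef := by
    refine PosDef.of_dotProduct_mulVec_pos hBh fun x hx => ?_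
    have hv : (Sum.elim x (0 : Fin q → ℝ)) ≠ 0 := by
      intro h; apply hx; funext i; exact congrFun h (Sum.inl i)
    have := hA.dotProduct_mulVec_pos hv
    simpa [Function.star_sumElim, fromBlocks_mulVec, sumElim_dotProduct_sumElim] using this
  haveI hBinv : Invertible B := hB.isUnit.invertible
  -- the Schur complement S is positive definite
  have hSpd : S.PosDef := by
    refine PosDef.of_dotProduct_mulVec_pos ?_ ?_
    · rw [hS]
      exact hCh.sub (isHermitian_conjTranspose_mul_mul E hBh.inv)
    · intro x hx
      have hv : Sum.elim (-((B⁻¹ * E) *ᵥ x)) x ≠ 0 := by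
        intro h; apply hx; funext i; exact congrFun h (Sum.inr i)
      have h1 := hA.dotProduct_mulVec_pos hv
      rw [dotProduct_mulVec] at h1
      rw [show Sum.elim (-((B⁻¹ * E) *ᵥ x)) x = (-((B⁻¹ * E) *ᵥ x)) ⊕ᵥ x from rfl] at h1
      rw [schur_complement_eq₁₁ E C _ _ hBh] at h1
      rw [neg_add_cancel] at h1
      simp only [star_zero, zero_vecMul, zero_dotProduct, zero_add] at h1
      rw [hS, dotProduct_mulVec]
      exact h1
  -- C is positive definite
  have hCpd : C.PosDef := by
    refine PosDef.of_dotProduct_mulVec_pos hCh fun x hx => ?_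
    have hv : (Sum.elim (0 : Fin p → ℝ) x) ≠ 0 := by
      intro h; apply hx; funext i; exact congrFun h (Sum.inr i)
    have := hA.dotProduct_mulVec_pos hv
    simpa [Function.star_sumElim, fromBlocks_mulVec, sumElim_dotProduct_sumElim] using this
  have hCsym : ∀ i j, C j i = C i j := fun i j => by
    have := congrFun (congrFun hCh i) j
    simpa [conjTranspose_apply] using this
  -- C₀ is positive definite
  have hC₀pd : C₀.PosDef := by
    refine PosDef.of_dotProduct_mulVec_pos ?_ ?_
    · ext i j
      simp only [conjTranspose_apply, star_trivial]
      rw [hC₀, hC₀]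
      by_cases h : π i = π j
      · rw [if_pos h, if_pos h.symm, hCsym i j]
      · rw [if_neg h, if_neg (fun hh => h hh.symm)]
    · intro x hx
      have rhs_eq : ∀ i j : Fin q, (∑ k : Fin s,
          (if π i = k then x i else 0) * (C i j * (if π j = k then x j else 0)))
          = x i * ((if π i = π j then C i j else 0) * x j) := by
        intro i j
        simp only [ite_mul, zero_mul, mul_ite, mul_zero, Finset.sum_ite_eq, Finset.mem_univ,
          if_true]
      have expand : star x ⬝ᵥ C₀ *ᵥ x = ∑ k : Fin s,
          star (fun i => if π i = k then x i else 0) ⬝ᵥ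
            C *ᵥ (fun i => if π i = k then x i else 0) := by
        calc star x ⬝ᵥ C₀ *ᵥ x
            = ∑ i, ∑ j, x i * ((if π i = π j then C i j else 0) * x j) := by
              simp [dotProduct, mulVec, hC₀, Finset.mul_sum]
          _ = ∑ i, ∑ j, ∑ k : Fin s,
              (if π i = k then x i else 0) * (C i j * (if π j = k then x j else 0)) := by
              exact Finset.sum_congr rfl fun i _ => Finset.sum_congr rfl fun j _ =>
                (rhs_eq i j).symm
          _ = ∑ i, ∑ k : Fin s, ∑ j,
              (if π i = k then x i else 0) * (C i j * (if π j = k then x j else 0)) :=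
              Finset.sum_congr rfl fun i _ => Finset.sum_comm
          _ = ∑ k : Fin s, ∑ i, ∑ j,
              (if π i = k then x i else 0) * (C i j * (if π j = k then x j else 0)) :=
              Finset.sum_comm
          _ = _ := by
              simp [dotProduct, mulVec, Finset.mul_sum]
      rw [expand]
      obtain ⟨i0, hi0⟩ : ∃ i, x i ≠ 0 := Function.ne_iff.mp hx
      refine Finset.sum_pos' (fun k _ => hCpd.posSemidef.dotProduct_mulVec_nonneg _) ⟨π i0, Finset.mem_univ _, ?_⟩
      refine hCpd.dotProduct_mulVec_pos (fun h0 => hi0 ?_)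
      have := congrFun h0 i0
      simpa using this
  -- C₀ * (C₀⁻¹ * Es) = Es
  have hCC : C₀ * (C₀⁻¹ * Es) = Es := by
    rw [← Matrix.mul_assoc,
      Matrix.mul_nonsing_inv _ ((Matrix.isUnit_iff_isUnit_det _).mp hC₀pd.isUnit),
      Matrix.one_mul]
  -- main argument
  intro μ hμ
  rw [spectrum.mem_iff] at hμ
  have hdet : (algebraMap ℂ (Matrix (Fin q) (Fin q) ℂ) μ
      - (C₀⁻¹ * Es).map Complex.ofReal).det = 0 := by
    by_contra h
    exact hμ ((Matrix.isUnit_iff_isUnit_det _).mpr (Ne.isUnit h))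
  obtain ⟨v, hv0, hv⟩ := Matrix.exists_mulVec_eq_zero_iff.mpr hdet
  have hvec : ((C₀⁻¹ * Es).map Complex.ofReal) *ᵥ v = μ • v := by
    rw [sub_mulVec] at hv
    have h2 : algebraMap ℂ (Matrix (Fin q) (Fin q) ℂ) μ *ᵥ v = μ • v := by
      rw [Algebra.algebraMap_eq_smul_one, smul_mulVec, one_mulVec]
    rw [h2] at hv
    have := sub_eq_zero.mp hv
    exact this.symm
  have hmapmul : (C₀.map Complex.ofReal) * ((C₀⁻¹ * Es).map Complex.ofReal)
      = Es.map Complex.ofReal := by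
    rw [show (Complex.ofReal : ℝ → ℂ) = ⇑Complex.ofRealHom from rfl,
      ← Matrix.map_mul, hCC]
  have hEsv : (Es.map Complex.ofReal) *ᵥ v = μ • ((C₀.map Complex.ofReal) *ᵥ v) := by
    rw [← hmapmul, ← mulVec_mulVec, hvec, mulVec_smul]
  have hsub : (C₀.map Complex.ofReal) *ᵥ v - (S.map Complex.ofReal) *ᵥ v
      = μ • ((C₀.map Complex.ofReal) *ᵥ v) := by
    rw [← sub_mulVec, show C₀.map Complex.ofReal - S.map Complex.ofReal
      = Es.map Complex.ofReal by rw [hEs]; ext i j; simp, hEsv]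
  have hSv : (S.map Complex.ofReal) *ᵥ v = (1 - μ) • ((C₀.map Complex.ofReal) *ᵥ v) := by
    rw [sub_smul, one_smul, ← hsub]
    abel
  have hSc := (posDef_map_ofReal hSpd).dotProduct_mulVec_pos hv0
  have hCc := (posDef_map_ofReal hC₀pd).dotProduct_mulVec_pos hv0
  set a := star v ⬝ᵥ (S.map Complex.ofReal) *ᵥ v with ha
  set b := star v ⬝ᵥ (C₀.map Complex.ofReal) *ᵥ v with hb
  have hab : a = (1 - μ) * b := by
    rw [ha, hSv, dotProduct_smul, smul_eq_mul, hb]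
  rw [Complex.lt_def] at hSc hCc
  simp only [Complex.zero_re, Complex.zero_im] at hSc hCc
  obtain ⟨hare, haim⟩ := hSc
  obtain ⟨hbre, hbim⟩ := hCc
  have him : a.im = (1 - μ).im * b.re := by
    rw [hab, Complex.mul_im, ← hbim]
    ring
  have hre : a.re = (1 - μ).re * b.re := by
    rw [hab, Complex.mul_re, ← hbim]
    ring
  have hμim : μ.im = 0 := by
    have h1 : (1 - μ).im * b.re = 0 := by rw [← him, ← haim]
    have h2 : (1 - μ).im = 0 := by
      rcases mul_eq_zero.mp h1 with h | h
      · exact h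
      · exact absurd h (by linarith)
    simpa [Complex.sub_im] using h2
  have hμre : μ.re < 1 := by
    have h3 : 0 < (1 - μ).re := by nlinarith [hre, hare, hbre]
    have : (1 - μ).re = 1 - μ.re := by simp [Complex.sub_re]
    linarith [this ▸ h3]
  exact ⟨hμim, hμre⟩
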